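/- Let K be a nonempty closed convex subset of a real Hilbert space H, A : K → K nonexpansive, and {xₙ} a sequence in K converging weakly to x̄ with xₙ − A(xₙ) → 0 strongly. Then x̄ ∈ K and A(x̄) = x̄. -/

import Mathlib

open Filter Topology RealInnerProductSpace

theorem stmt19 {H : Type*} [NormedAddCommGroup H] [InnerProductSpace ℝ H]
    [CompleteSpace H]
    (K : Set H) (hKne : K.Nonempty) (hKcl : IsClosed K) (hKconv : Convex ℝ K)
    (A : H → H) (hAK : Set.MapsTo A K K)
    (hA : ∀ x ∈ K, ∀ y ∈ K, ‖A x - A y‖ ≤ ‖x - y‖)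
    (x : ℕ → H) (hxK : ∀ n, x n ∈ K) (xbar : H)
    (hweak : ∀ φ : H, Tendsto (fun n => ⟪x n, φ⟫) atTop (𝓝 ⟪xbar, φ⟫))
    (hres : Tendsto (fun n => x n - A (x n)) atTop (𝓝 0)) :
    xbar ∈ K ∧ A xbar = xbar := by
  -- Step 1: xbar ∈ K by Hahn-Banach separation
  have hxbarK : xbar ∈ K := by
    by_contra hx
    obtain ⟨f, u, hfK, hfx⟩ := geometric_hahn_banach_closed_point hKconv hKcl hx
    set φ := (InnerProductSpace.toDual ℝ H).symm f with hφ
    have hrep : ∀ z : H, ⟪z, φ⟫ = f z := by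
      intro z
      rw [real_inner_comm, hφ, InnerProductSpace.toDual_symm_apply]
    have hlim : Tendsto (fun n => ⟪x n, φ⟫) atTop (𝓝 ⟪xbar, φ⟫) := hweak φ
    have hle : ⟪xbar, φ⟫ ≤ u :=
      le_of_tendsto hlim (Eventually.of_forall fun n => (hrep (x n)).trans_le
        (hfK _ (hxK n)).le)
    rw [hrep xbar] at hle
    exact absurd hfx (not_lt.2 hle)
  refine ⟨hxbarK, ?_⟩
  -- Step 2: boundedness of ‖x n - xbar‖ via Banach-Steinhaus
  obtain ⟨C, hC⟩ : ∃ C, ∀ n, ‖innerSL ℝ (x n)‖ ≤ C := by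
    apply banach_steinhaus
    intro φ
    have := (hweak φ).norm
    obtain ⟨C, hC⟩ := this.bddAbove_range
    exact ⟨C, fun n => by simpa using hC ⟨n, rfl⟩⟩
  have hxb : ∀ n, ‖x n - xbar‖ ≤ C + ‖xbar‖ := fun n => by
    have : ‖x n‖ ≤ C := by simpa using hC n
    calc ‖x n - xbar‖ ≤ ‖x n‖ + ‖xbar‖ := norm_sub_le _ _
    _ ≤ C + ‖xbar‖ := by linarith
  set M := C + ‖xbar‖ with hM
  have hM0 : 0 ≤ M := le_trans (norm_nonneg _) (hxb 0)
  -- residual norms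
  set ε : ℕ → ℝ := fun n => ‖x n - A (x n)‖ with hε
  have hεlim : Tendsto ε atTop (𝓝 0) := by
    simpa using hres.norm
  have hε0 : ∀ n, 0 ≤ ε n := fun n => norm_nonneg _
  -- f n := ‖x n - A xbar‖² - ‖x n - xbar‖² tends to ‖xbar - A xbar‖²
  have hflim : Tendsto (fun n => ‖x n - A xbar‖ ^ 2 - ‖x n - xbar‖ ^ 2) atTop
      (𝓝 (‖xbar - A xbar‖ ^ 2)) := by
    have hexp : ∀ n, ‖x n - A xbar‖ ^ 2 - ‖x n - xbar‖ ^ 2 =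
        ‖A xbar‖ ^ 2 - ‖xbar‖ ^ 2 - 2 * ⟪x n, A xbar - xbar⟫ := by
      intro n
      have h1 : ‖x n - A xbar‖ ^ 2 = ‖x n‖ ^ 2 - 2 * ⟪x n, A xbar⟫ + ‖A xbar‖ ^ 2 := by
        rw [← real_inner_self_eq_norm_sq, ← real_inner_self_eq_norm_sq,
          ← real_inner_self_eq_norm_sq]
        simp only [inner_sub_left, inner_sub_right, real_inner_comm (A xbar) (x n)]
        ring
      have h2 : ‖x n - xbar‖ ^ 2 = ‖x n‖ ^ 2 - 2 * ⟪x n, xbar⟫ + ‖xbar‖ ^ 2 := by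
        rw [← real_inner_self_eq_norm_sq, ← real_inner_self_eq_norm_sq,
          ← real_inner_self_eq_norm_sq]
        simp only [inner_sub_left, inner_sub_right, real_inner_comm xbar (x n)]
        ring
      rw [h1, h2, inner_sub_right]; ring
    have htarget : ‖xbar - A xbar‖ ^ 2 =
        ‖A xbar‖ ^ 2 - ‖xbar‖ ^ 2 - 2 * ⟪xbar, A xbar - xbar⟫ := by
      rw [← real_inner_self_eq_norm_sq, ← real_inner_self_eq_norm_sq,
        ← real_inner_self_eq_norm_sq]
      simp only [inner_sub_left, inner_sub_right, real_inner_comm (A xbar) xbar]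
      ring
    simp_rw [hexp, htarget]
    exact (tendsto_const_nhds.sub ((hweak (A xbar - xbar)).const_mul 2))
  -- f n ≤ ε n ^ 2 + 2 * ε n * M
  have hfbound : ∀ n, ‖x n - A xbar‖ ^ 2 - ‖x n - xbar‖ ^ 2 ≤ ε n ^ 2 + 2 * ε n * M := by
    intro n
    have h1 : ‖x n - A xbar‖ ≤ ε n + ‖x n - xbar‖ := by
      calc ‖x n - A xbar‖ = ‖(x n - A (x n)) + (A (x n) - A xbar)‖ := by abel_nf
      _ ≤ ‖x n - A (x n)‖ + ‖A (x n) - A xbar‖ := norm_add_le _ _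
      _ ≤ ε n + ‖x n - xbar‖ := add_le_add le_rfl (hA _ (hxK n) _ hxbarK)
    have h2 : ‖x n - A xbar‖ ^ 2 ≤ (ε n + ‖x n - xbar‖) ^ 2 :=
      pow_le_pow_left₀ (norm_nonneg _) h1 2
    have h3 : ‖x n - xbar‖ ≤ M := hxb n
    nlinarith [hε0 n, norm_nonneg (x n - xbar)]
  have hglim : Tendsto (fun n => ε n ^ 2 + 2 * ε n * M) atTop (𝓝 0) := by
    have := ((hεlim.pow 2).add ((hεlim.const_mul 2).mul_const M))
    simpa using this
  have hle : ‖xbar - A xbar‖ ^ 2 ≤ 0 :=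
    le_of_tendsto_of_tendsto' hflim hglim hfbound
  have : ‖xbar - A xbar‖ = 0 := by nlinarith [norm_nonneg (xbar - A xbar)]
  have := sub_eq_zero.mp (norm_eq_zero.mp this)
  exact this.symm
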